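/- Let γ, ν ∈ ℝ^ℓ be nonnegative vectors, and let p, q be distributions on [k] with p_i + q_i > 0 for all i. Let A := {(Tp, Tq) : T ∈ J^{γ,ν}_{ℓ,k}}. If T ∈ J^{γ,ν}_{ℓ,k} and (Tp, Tq) is an extreme point of A, then, with ℓ' := 2ℓ², there exist a threshold channel T₁ ∈ T^thresh_{ℓ',k} for (p,q) and an extreme point T₂ of the convex set J^{γ,ν}_{ℓ,ℓ'} such that (Tp, Tq) = ((T₂·T₁)p, (T₂·T₁)q), where T₂·T₁ denotes the matrix product. -/

import Mathlib

open scoped Classical ENNReal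
open Finset

noncomputable section

/-- `p` is a probability distribution on `Fin k`. -/
def IsDist {k : ℕ} (p : Fin k → ℝ) : Prop :=
  (∀ i, 0 ≤ p i) ∧ ∑ i, p i = 1

/-- `T` is a channel from `[k]` to `[ℓ]`: nonnegative entries, columns sum to 1. -/
def IsChannel {ℓ k : ℕ} (T : Matrix (Fin ℓ) (Fin k) ℝ) : Prop :=
  (∀ r c, 0 ≤ T r c) ∧ ∀ c, ∑ r, T r c = 1

/-- Squared Hellinger divergence `d_h²(p,q) = Σ_i (√p_i − √q_i)²`. -/
def hellingerSq {k : ℕ} (p q : Fin k → ℝ) : ℝ :=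
  ∑ i, (Real.sqrt (p i) - Real.sqrt (q i)) ^ 2

/-- Total variation distance `d_TV(p,q) = (1/2) Σ_i |p_i − q_i|`. -/
def tvDist {k : ℕ} (p q : Fin k → ℝ) : ℝ :=
  (1 / 2) * ∑ i, |p i - q i|

/-- `T` is an `ε`-LDP channel: `T(r,c) ≤ e^ε T(r,c')` for all rows `r`, columns `c, c'`. -/
def IsLDP {ℓ k : ℕ} (ε : ℝ) (T : Matrix (Fin ℓ) (Fin k) ℝ) : Prop :=
  IsChannel T ∧ ∀ r c c', T r c ≤ Real.exp ε * T r c'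

/-- The deterministic channel induced by a map `f : [k] → [ℓ]`. -/
def detChannel {k ℓ : ℕ} (f : Fin k → Fin ℓ) : Matrix (Fin ℓ) (Fin k) ℝ :=
  fun r c => if r = f c then 1 else 0

/-- Likelihood ratio `p_i / q_i`, taken to be `+∞` when `q_i = 0`. -/
def lr {k : ℕ} (p q : Fin k → ℝ) (i : Fin k) : EReal :=
  if q i = 0 then ⊤ else ((p i / q i : ℝ) : EReal)

/-- `T` is a threshold channel for `(p, q)`: it is deterministic, induced by a map `f`,
and whenever `p_u/q_u < p_v/q_v` and `f u = f v`, every `w` whose likelihood ratio lies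
strictly between those of `u` and `v` satisfies `f w = f u`. -/
def IsThresholdChannel {k ℓ : ℕ} (p q : Fin k → ℝ) (T : Matrix (Fin ℓ) (Fin k) ℝ) : Prop :=
  ∃ f : Fin k → Fin ℓ, T = detChannel f ∧
    ∀ u v w : Fin k, lr p q u < lr p q v → f u = f v →
      lr p q u < lr p q w → lr p q w < lr p q v → f w = f u

/-- The LP family of channels `J^{γ,ν}_{ℓ,k}`:
channels `T` with `T(j,i) ≤ γ_j T(j,i') + ν_j` for all rows `j` and columns `i, i'`. -/
def IsLP {ℓ k : ℕ} (γ ν : Fin ℓ → ℝ) (T : Matrix (Fin ℓ) (Fin k) ℝ) : Prop :=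
  IsChannel T ∧ ∀ (j : Fin ℓ) (i i' : Fin k), T j i ≤ γ j * T j i' + ν j

/-- Minimum entry of row `r` of `T`. -/
def rowMin {ℓ k : ℕ} (T : Matrix (Fin ℓ) (Fin k) ℝ) (r : Fin ℓ) : ℝ :=
  sInf (Set.range fun c => T r c)

/-- Maximum entry of row `r` of `T`. -/
def rowMax {ℓ k : ℕ} (T : Matrix (Fin ℓ) (Fin k) ℝ) (r : Fin ℓ) : ℝ :=
  sSup (Set.range fun c => T r c)

/-- The entry `T(r,c)` is min-tight: `T(r,c) = m_r` and `M_r = γ_r m_r + ν_r`. -/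
def MinTight {ℓ k : ℕ} (γ ν : Fin ℓ → ℝ) (T : Matrix (Fin ℓ) (Fin k) ℝ)
    (r : Fin ℓ) (c : Fin k) : Prop :=
  T r c = rowMin T r ∧ rowMax T r = γ r * rowMin T r + ν r

/-- The entry `T(r,c)` is max-tight: `T(r,c) = M_r` and `M_r = γ_r m_r + ν_r`. -/
def MaxTight {ℓ k : ℕ} (γ ν : Fin ℓ → ℝ) (T : Matrix (Fin ℓ) (Fin k) ℝ)
    (r : Fin ℓ) (c : Fin k) : Prop :=
  T r c = rowMax T r ∧ rowMax T r = γ r * rowMin T r + ν r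

namespace Stmt13Aux

variable {k : ℕ} {p q : Fin k → ℝ}

lemma lr_le_iff (hq : ∀ i, 0 ≤ q i) (hpq : ∀ i, 0 < p i + q i)
    (u v : Fin k) : lr p q u ≤ lr p q v ↔ p u * q v ≤ p v * q u := by
  unfold lr
  by_cases hqu : q u = 0 <;> by_cases hqv : q v = 0
  · simp [hqu, hqv]
  · have hpu : 0 < p u := by have := hpq u; rw [hqu] at this; linarith
    have hqv' : 0 < q v := lt_of_le_of_ne (hq v) (Ne.symm hqv)
    simp only [hqu, hqv, if_true, if_false, top_le_iff]
    constructor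
    · intro h; exact absurd h (by exact_mod_cast EReal.coe_ne_top _)
    · intro h; nlinarith
  · have hpv : 0 < p v := by have := hpq v; rw [hqv] at this; linarith
    have hqu' : 0 < q u := lt_of_le_of_ne (hq u) (Ne.symm hqu)
    simp only [hqu, hqv, if_false, if_true, le_top, true_iff]
    nlinarith
  · have hqu' : 0 < q u := lt_of_le_of_ne (hq u) (Ne.symm hqu)
    have hqv' : 0 < q v := lt_of_le_of_ne (hq v) (Ne.symm hqv)
    simp only [hqu, hqv, if_false, EReal.coe_le_coe_iff]
    rw [div_le_div_iff₀ hqu' hqv']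

lemma lr_lt_iff (hq : ∀ i, 0 ≤ q i) (hpq : ∀ i, 0 < p i + q i)
    (u v : Fin k) : lr p q u < lr p q v ↔ p u * q v < p v * q u := by
  rw [lt_iff_not_ge, lr_le_iff hq hpq, lt_iff_not_ge]

/-- Upper-set predicate. -/
def Upred (p q : Fin k → ℝ) (α β : ℝ) : Prop :=
  ∀ u v, p u * q v ≤ p v * q u → 0 < α * p u + β * q u → 0 < α * p v + β * q v

/-- Lower-set predicate. -/
def Lpred (p q : Fin k → ℝ) (α β : ℝ) : Prop :=
  ∀ u v, p u * q v ≤ p v * q u → 0 < α * p v + β * q v → 0 < α * p u + β * q u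

lemma upred_of_nonneg_nonpos (hp : ∀ i, 0 ≤ p i) (hq : ∀ i, 0 ≤ q i)
    (hpq : ∀ i, 0 < p i + q i) {α β : ℝ} (hα : 0 ≤ α) (hβ : β ≤ 0) :
    Upred p q α β := by
  intro u v hcr h
  have hβq : β * q u ≤ 0 := mul_nonpos_of_nonpos_of_nonneg hβ (hq u)
  have hαpu : 0 < α * p u := by linarith
  have hα' : 0 < α := by
    rcases lt_or_eq_of_le hα with h' | h'
    · exact h'
    · exfalso; rw [← h'] at hαpu; simp at hαpu
  have hpu : 0 < p u := by nlinarith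
  by_cases hqv : q v = 0
  · have hpv : 0 < p v := by have := hpq v; rw [hqv] at this; linarith
    rw [hqv]; nlinarith
  · have hqv' : 0 < q v := lt_of_le_of_ne (hq v) (Ne.symm hqv)
    have hqu' : 0 < q u := by
      rcases lt_or_eq_of_le (hq u) with h' | h'
      · exact h'
      · exfalso; rw [← h', mul_zero] at hcr; nlinarith [mul_pos hpu hqv']
    nlinarith

lemma lpred_of_nonpos_nonneg (hp : ∀ i, 0 ≤ p i) (hq : ∀ i, 0 ≤ q i)
    (hpq : ∀ i, 0 < p i + q i) {α β : ℝ} (hα : α ≤ 0) (hβ : 0 ≤ β) :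
    Lpred p q α β := by
  intro u v hcr h
  have hαp : α * p v ≤ 0 := mul_nonpos_of_nonpos_of_nonneg hα (hp v)
  have hβqv : 0 < β * q v := by linarith
  have hβ' : 0 < β := by
    rcases lt_or_eq_of_le hβ with h' | h'
    · exact h'
    · exfalso; rw [← h'] at hβqv; simp at hβqv
  have hqv : 0 < q v := by nlinarith
  by_cases hpu : p u = 0
  · have hqu : 0 < q u := by have := hpq u; rw [hpu] at this; linarith
    rw [hpu]; nlinarith
  · have hpu' : 0 < p u := lt_of_le_of_ne (hp u) (Ne.symm hpu)
    have hpv' : 0 < p v := by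
      rcases lt_or_eq_of_le (hp v) with h' | h'
      · exact h'
      · exfalso; rw [← h', zero_mul] at hcr; nlinarith [mul_pos hpu' hqv]
    nlinarith

lemma upred_or_lpred (hp : ∀ i, 0 ≤ p i) (hq : ∀ i, 0 ≤ q i)
    (hpq : ∀ i, 0 < p i + q i) (α β : ℝ) :
    Upred p q α β ∨ Lpred p q α β := by
  rcases le_or_gt 0 α with hα | hα
  · rcases le_or_gt β 0 with hβ | hβ
    · exact Or.inl (upred_of_nonneg_nonpos hp hq hpq hα hβ)
    · rcases lt_or_eq_of_le hα with hα' | hα'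
      · -- 0 < α, 0 < β : everything positive
        left; intro u v _ _
        have := hpq v
        rcases lt_or_eq_of_le (hp v) with h' | h'
        · nlinarith [mul_pos hα' h', mul_nonneg hβ.le (hq v)]
        · have hqv : 0 < q v := by rw [← h'] at this; linarith
          nlinarith [mul_pos hβ hqv, mul_nonneg hα (hp v)]
      · exact Or.inr (lpred_of_nonpos_nonneg hp hq hpq (le_of_eq hα'.symm) hβ.le)
  · rcases le_or_gt 0 β with hβ | hβ
    · exact Or.inr (lpred_of_nonpos_nonneg hp hq hpq hα.le hβ)
    · -- α < 0, β < 0 : vacuous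
      left; intro u v _ h
      exfalso
      have h1 : α * p u ≤ 0 := mul_nonpos_of_nonpos_of_nonneg hα.le (hp u)
      have h2 : β * q u ≤ 0 := mul_nonpos_of_nonpos_of_nonneg hβ.le (hq u)
      linarith


/-- Indicator-type function, arranged to be monotone along the likelihood-ratio order. -/
def tf (p q : Fin k → ℝ) (α β : ℝ) (i : Fin k) : ℕ :=
  if Upred p q α β then (if 0 < α * p i + β * q i then 1 else 0)
  else (if 0 < α * p i + β * q i then 0 else 1)

lemma tf_le_one (α β : ℝ) (i : Fin k) : tf p q α β i ≤ 1 := by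
  unfold tf; split_ifs <;> norm_num

lemma tf_mono (hp : ∀ i, 0 ≤ p i) (hq : ∀ i, 0 ≤ q i) (hpq : ∀ i, 0 < p i + q i)
    (α β : ℝ) {u v : Fin k} (hcr : p u * q v ≤ p v * q u) :
    tf p q α β u ≤ tf p q α β v := by
  unfold tf
  by_cases hU : Upred p q α β
  · simp only [hU, if_true]
    by_cases hu : 0 < α * p u + β * q u
    · rw [if_pos hu, if_pos (hU u v hcr hu)]
    · rw [if_neg hu]; split_ifs <;> norm_num
  · have hL : Lpred p q α β := (upred_or_lpred hp hq hpq α β).resolve_left hU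
    simp only [hU, if_false]
    by_cases hv : 0 < α * p v + β * q v
    · rw [if_pos hv, if_pos (hL u v hcr hv)]
    · rw [if_neg hv]; split_ifs <;> norm_num

lemma tf_eq_iff (α β : ℝ) {u v : Fin k} (h : tf p q α β u = tf p q α β v) :
    (0 < α * p u + β * q u ↔ 0 < α * p v + β * q v) := by
  unfold tf at h
  by_cases hU : Upred p q α β <;> simp only [hU, if_true, if_false] at h <;>
    split_ifs at h <;> first | (constructor <;> intro <;> assumption) | tauto | simp_all


variable {l : ℕ}

/-- Rank function counting indicator values over all ordered pairs of rows. -/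
def rk (p q : Fin k → ℝ) (a b : Fin l → ℝ) (i : Fin k) : ℕ :=
  ∑ jp : Fin l × Fin l, tf p q (a jp.1 - a jp.2) (b jp.1 - b jp.2) i

lemma rk_le (p q : Fin k → ℝ) (a b : Fin l → ℝ) (i : Fin k) : rk p q a b i ≤ l * l := by
  calc rk p q a b i ≤ ∑ _jp : Fin l × Fin l, 1 :=
        Finset.sum_le_sum fun jp _ => tf_le_one _ _ _
    _ = l * l := by simp [Finset.card_univ]

lemma rk_mono (hp : ∀ i, 0 ≤ p i) (hq : ∀ i, 0 ≤ q i) (hpq : ∀ i, 0 < p i + q i)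
    (a b : Fin l → ℝ) {u v : Fin k} (hcr : p u * q v ≤ p v * q u) :
    rk p q a b u ≤ rk p q a b v :=
  Finset.sum_le_sum fun jp _ => tf_mono hp hq hpq _ _ hcr

lemma rk_eq_pattern (hp : ∀ i, 0 ≤ p i) (hq : ∀ i, 0 ≤ q i) (hpq : ∀ i, 0 < p i + q i)
    (a b : Fin l → ℝ) {u v : Fin k} (hcr : p u * q v ≤ p v * q u)
    (h : rk p q a b u = rk p q a b v) (j j' : Fin l) :
    (0 < (a j - a j') * p u + (b j - b j') * q u ↔
      0 < (a j - a j') * p v + (b j - b j') * q v) := by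
  have hterm : ∀ jp : Fin l × Fin l,
      tf p q (a jp.1 - a jp.2) (b jp.1 - b jp.2) u = tf p q (a jp.1 - a jp.2) (b jp.1 - b jp.2) v := by
    intro jp
    by_contra hne
    have hlt : tf p q (a jp.1 - a jp.2) (b jp.1 - b jp.2) u
        < tf p q (a jp.1 - a jp.2) (b jp.1 - b jp.2) v :=
      lt_of_le_of_ne (tf_mono hp hq hpq _ _ hcr) hne
    have : rk p q a b u < rk p q a b v :=
      Finset.sum_lt_sum (fun jp _ => tf_mono hp hq hpq _ _ hcr) ⟨jp, Finset.mem_univ _, hlt⟩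
    omega
  exact tf_eq_iff _ _ (hterm (j, j'))

/-- Membership in the box-simplex polytope. -/
def inQ (lb ub : Fin l → ℝ) (x : Fin l → ℝ) : Prop :=
  (∀ j, lb j ≤ x j) ∧ (∀ j, x j ≤ ub j) ∧ ∑ j, x j = 1

/-- Optimality certificate for maximizing `⟨c, ·⟩` over the box-simplex polytope. -/
def Cert (lb ub c x : Fin l → ℝ) : Prop :=
  ∀ j j', c j' < c j → x j = ub j ∨ x j' = lb j'

lemma cert_of_max {lb ub c x : Fin l → ℝ} (hx : inQ lb ub x)
    (hmax : ∀ y, inQ lb ub y → ∑ j, c j * y j ≤ ∑ j, c j * x j) :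
    Cert lb ub c x := by
  intro j j' hcc
  by_contra hcon
  push_neg at hcon
  obtain ⟨h1, h2⟩ := hcon
  have hjj' : j ≠ j' := fun h => absurd (h ▸ hcc) (lt_irrefl _)
  have hxj : x j < ub j := lt_of_le_of_ne (hx.2.1 j) h1
  have hxj' : lb j' < x j' := lt_of_le_of_ne (hx.1 j') (Ne.symm h2)
  set ε := min (ub j - x j) (x j' - lb j') with hε
  have hε0 : 0 < ε := lt_min (by linarith) (by linarith)
  set y : Fin l → ℝ := fun t => x t + (if t = j then ε else 0) - (if t = j' then ε else 0) with hy
  have hyj : y j = x j + ε := by simp [hy, hjj']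
  have hyj' : y j' = x j' - ε := by simp [hy, Ne.symm hjj']
  have hyt : ∀ t, t ≠ j → t ≠ j' → y t = x t := by
    intro t h1' h2'; simp [hy, h1', h2']
  have hεle1 : ε ≤ ub j - x j := min_le_left _ _
  have hεle2 : ε ≤ x j' - lb j' := min_le_right _ _
  have hyQ : inQ lb ub y := by
    refine ⟨fun t => ?_, fun t => ?_, ?_⟩
    · rcases eq_or_ne t j with rfl | h1'
      · rw [hyj]; have := hx.1 t; linarith
      · rcases eq_or_ne t j' with rfl | h2'
        · rw [hyj']; linarith
        · rw [hyt t h1' h2']; exact hx.1 t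
    · rcases eq_or_ne t j with rfl | h1'
      · rw [hyj]; linarith
      · rcases eq_or_ne t j' with rfl | h2'
        · rw [hyj']; have := hx.2.1 t; linarith
        · rw [hyt t h1' h2']; exact hx.2.1 t
    · have : ∑ t, y t = ∑ t, x t + ∑ t, (if t = j then ε else 0) - ∑ t, (if t = j' then ε else 0) := by
        rw [hy]; rw [Finset.sum_sub_distrib, Finset.sum_add_distrib]
      rw [this, Finset.sum_ite_eq' Finset.univ j (fun _ => ε),
        Finset.sum_ite_eq' Finset.univ j' (fun _ => ε)]
      simp [hx.2.2]
  have hval : ∑ t, c t * y t = ∑ t, c t * x t + ε * (c j - c j') := by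
    have : ∀ t, c t * y t = c t * x t + (if t = j then c t * ε else 0)
        - (if t = j' then c t * ε else 0) := by
      intro t
      rcases eq_or_ne t j with rfl | h1'
      · rw [hyj, if_pos rfl, if_neg hjj']; ring
      · rcases eq_or_ne t j' with rfl | h2'
        · rw [hyj', if_neg h1', if_pos rfl]; ring
        · rw [hyt t h1' h2', if_neg h1', if_neg h2']; ring
    rw [Finset.sum_congr rfl fun t _ => this t, Finset.sum_sub_distrib, Finset.sum_add_distrib,
      Finset.sum_ite_eq' Finset.univ j (fun t => c t * ε),
      Finset.sum_ite_eq' Finset.univ j' (fun t => c t * ε)]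
    simp; ring
  have := hmax y hyQ
  rw [hval] at this
  nlinarith

lemma max_of_cert {lb ub c x : Fin l → ℝ} (hx : inQ lb ub x) (hc : Cert lb ub c x) :
    ∀ y, inQ lb ub y → ∑ j, c j * y j ≤ ∑ j, c j * x j := by
  intro y hy
  set d : Fin l → ℝ := fun j => y j - x j with hd
  have hsum : ∑ j, d j = 0 := by
    rw [hd]; rw [Finset.sum_sub_distrib, hx.2.2, hy.2.2]; ring
  have key : ∑ j, c j * d j ≤ 0 := by
    by_cases hpos : ∃ j0, 0 < d j0
    · obtain ⟨j0, hj0⟩ := hpos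
      set P := Finset.univ.filter (fun j => 0 < d j) with hP
      have hPne : P.Nonempty := ⟨j0, by simp [hP, hj0]⟩
      obtain ⟨j1, hj1P, hj1max⟩ := Finset.exists_max_image P c hPne
      have hj1d : 0 < d j1 := by simp [hP] at hj1P; exact hj1P
      have hterm : ∀ j, c j * d j ≤ c j1 * d j := by
        intro j
        rcases lt_trichotomy (d j) 0 with h | h | h
        · -- need c j1 ≤ c j
          have hcj : c j1 ≤ c j := by
            by_contra hcj
            push_neg at hcj
            rcases hc j1 j hcj with h' | h'
            · have : y j1 ≤ ub j1 := hy.2.1 j1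
              have : x j1 < y j1 := by rw [hd] at hj1d; dsimp at hj1d; linarith
              linarith [h' ▸ this]
            · have : lb j ≤ y j := hy.1 j
              have hxy : y j < x j := by rw [hd] at h; dsimp at h; linarith
              rw [h'] at hxy; linarith
          nlinarith
        · rw [h]; ring_nf; rfl
        · have hcj : c j ≤ c j1 := hj1max j (by simp [hP, h])
          nlinarith
      calc ∑ j, c j * d j ≤ ∑ j, c j1 * d j := Finset.sum_le_sum fun j _ => hterm j
        _ = c j1 * ∑ j, d j := by rw [Finset.mul_sum]
        _ = 0 := by rw [hsum]; ring
    · push_neg at hpos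
      have : ∀ j ∈ Finset.univ, d j = 0 := by
        intro j _
        have := (Finset.sum_eq_zero_iff_of_nonpos (fun j _ => hpos j)).mp hsum
        exact this j (Finset.mem_univ j)
      have : ∑ j, c j * d j = 0 :=
        Finset.sum_eq_zero fun j hj => by rw [this j hj]; ring
      linarith
  have : ∑ j, c j * y j - ∑ j, c j * x j = ∑ j, c j * d j := by
    rw [hd, ← Finset.sum_sub_distrib]
    exact Finset.sum_congr rfl fun j _ => by ring
  linarith




variable {l m n : ℕ} {γ ν : Fin l → ℝ}

lemma detChannel_mul_apply (S : Matrix (Fin l) (Fin m) ℝ) (f : Fin n → Fin m)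
    (j : Fin l) (i : Fin n) : (S * detChannel f) j i = S j (f i) := by
  rw [Matrix.mul_apply]
  have : ∀ c, S j c * detChannel f c i = if c = f i then S j c else 0 := by
    intro c; unfold detChannel; split_ifs <;> simp
  rw [Finset.sum_congr rfl fun c _ => this c, Finset.sum_ite_eq' Finset.univ (f i) (fun c => S j c)]
  simp

lemma isLP_comp {S : Matrix (Fin l) (Fin m) ℝ} (hS : IsLP γ ν S) (f : Fin n → Fin m) :
    IsLP γ ν (S * detChannel f) := by
  refine ⟨⟨fun r c => ?_, fun c => ?_⟩, fun j i i' => ?_⟩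
  · rw [detChannel_mul_apply]; exact hS.1.1 r (f c)
  · simp only [detChannel_mul_apply]; exact hS.1.2 (f c)
  · simp only [detChannel_mul_apply]; exact hS.2 j (f i) (f i')

lemma convex_LP : Convex ℝ {S : Matrix (Fin l) (Fin m) ℝ | IsLP γ ν S} := by
  rintro S hS S' hS' a b ha hb hab
  refine ⟨⟨fun r c => ?_, fun c => ?_⟩, fun j i i' => ?_⟩
  · have : (a • S + b • S') r c = a * S r c + b * S' r c := rfl
    rw [this]
    have := hS.1.1 r c; have := hS'.1.1 r c
    positivity
  · have : ∀ r, (a • S + b • S') r c = a * S r c + b * S' r c := fun r => rfl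
    rw [Finset.sum_congr rfl fun r _ => this r, Finset.sum_add_distrib, ← Finset.mul_sum,
      ← Finset.mul_sum, hS.1.2 c, hS'.1.2 c]
    linarith
  · have h1 : (a • S + b • S') j i = a * S j i + b * S' j i := rfl
    have h2 : (a • S + b • S') j i' = a * S j i' + b * S' j i' := rfl
    rw [h1, h2]
    have e1 : a * S j i ≤ a * (γ j * S j i' + ν j) :=
      mul_le_mul_of_nonneg_left (hS.2 j i i') ha
    have e2 : b * S' j i ≤ b * (γ j * S' j i' + ν j) :=
      mul_le_mul_of_nonneg_left (hS'.2 j i i') hb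
    have hν : a * ν j + b * ν j = ν j := by rw [← add_mul, hab, one_mul]
    nlinarith [e1, e2, hν]

lemma isClosed_LP : IsClosed {S : Matrix (Fin l) (Fin m) ℝ | IsLP γ ν S} := by
  have hev : ∀ (r : Fin l) (c : Fin m), Continuous fun S : Matrix (Fin l) (Fin m) ℝ => S r c :=
    fun r c => (continuous_apply c).comp (continuous_apply r)
  have h1 : IsClosed {S : Matrix (Fin l) (Fin m) ℝ | ∀ r c, 0 ≤ S r c} := by
    have : {S : Matrix (Fin l) (Fin m) ℝ | ∀ r c, 0 ≤ S r c}
        = ⋂ r, ⋂ c, {S : Matrix (Fin l) (Fin m) ℝ | 0 ≤ S r c} := by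
      ext S; simp
    rw [this]
    exact isClosed_iInter fun r => isClosed_iInter fun c =>
      isClosed_le continuous_const (hev r c)
  have h2 : IsClosed {S : Matrix (Fin l) (Fin m) ℝ | ∀ c, ∑ r, S r c = 1} := by
    have : {S : Matrix (Fin l) (Fin m) ℝ | ∀ c, ∑ r, S r c = 1}
        = ⋂ c, {S : Matrix (Fin l) (Fin m) ℝ | ∑ r, S r c = 1} := by
      ext S; simp
    rw [this]
    exact isClosed_iInter fun c =>
      isClosed_eq (continuous_finset_sum _ fun r _ => hev r c) continuous_const
  have h3 : IsClosed {S : Matrix (Fin l) (Fin m) ℝ | ∀ j i i', S j i ≤ γ j * S j i' + ν j} := by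
    have : {S : Matrix (Fin l) (Fin m) ℝ | ∀ j i i', S j i ≤ γ j * S j i' + ν j}
        = ⋂ j, ⋂ i, ⋂ i', {S : Matrix (Fin l) (Fin m) ℝ | S j i ≤ γ j * S j i' + ν j} := by
      ext S; simp
    rw [this]
    exact isClosed_iInter fun j => isClosed_iInter fun i => isClosed_iInter fun i' =>
      isClosed_le (hev j i) (((continuous_const.mul (hev j i'))).add continuous_const)
  have : {S : Matrix (Fin l) (Fin m) ℝ | IsLP γ ν S}
      = ({S | ∀ r c, 0 ≤ S r c} ∩ {S | ∀ c, ∑ r, S r c = 1}) ∩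
        {S | ∀ j i i', S j i ≤ γ j * S j i' + ν j} := by
    ext S; constructor
    · rintro ⟨⟨ha, hb⟩, hc⟩; exact ⟨⟨ha, hb⟩, hc⟩
    · rintro ⟨⟨ha, hb⟩, hc⟩; exact ⟨⟨ha, hb⟩, hc⟩
  rw [this]
  exact ((h1.inter h2).inter h3)

lemma isCompact_LP (hm : 0 < m) : IsCompact {S : Matrix (Fin l) (Fin m) ℝ | IsLP γ ν S} := by
  have hbox : IsCompact {S : Matrix (Fin l) (Fin m) ℝ | ∀ r c, S r c ∈ Set.Icc (0:ℝ) 1} := by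
    have h : IsCompact (Set.univ.pi fun _ : Fin l => Set.univ.pi fun _ : Fin m =>
        Set.Icc (0:ℝ) 1) :=
      isCompact_univ_pi fun _ => isCompact_univ_pi fun _ => isCompact_Icc
    have heq : {S : Matrix (Fin l) (Fin m) ℝ | ∀ r c, S r c ∈ Set.Icc (0:ℝ) 1}
        = (Set.univ.pi fun _ : Fin l => Set.univ.pi fun _ : Fin m => Set.Icc (0:ℝ) 1) := by
      ext S
      constructor
      · intro h' r _ c _; exact Set.mem_Icc.mpr (h' r c)
      · intro h' r c; exact Set.mem_Icc.mp (h' r (Set.mem_univ r) c (Set.mem_univ c))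
    rw [heq]
    exact h
  apply hbox.of_isClosed_subset isClosed_LP
  intro S hS r c
  refine ⟨hS.1.1 r c, ?_⟩
  have := hS.1.2 c
  calc S r c ≤ ∑ r', S r' c := Finset.single_le_sum (fun r' _ => hS.1.1 r' c) (Finset.mem_univ r)
    _ = 1 := hS.1.2 c


section Hull

variable {E : Type*} [NormedAddCommGroup E] [NormedSpace ℝ E]

lemma isCompact_convexJoin {K L : Set E} (hK : IsCompact K) (hL : IsCompact L) :
    IsCompact (convexJoin ℝ K L) := by
  have heq : convexJoin ℝ K L =
      (fun z : ℝ × E × E => (1 - z.1) • z.2.1 + z.1 • z.2.2) ''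
        (Set.Icc (0:ℝ) 1 ×ˢ (K ×ˢ L)) := by
    ext x
    rw [mem_convexJoin]
    constructor
    · rintro ⟨a, ha, b, hb, hseg⟩
      rw [segment_eq_image] at hseg
      obtain ⟨θ, hθ, hx⟩ := hseg
      exact ⟨(θ, a, b), ⟨hθ, ha, hb⟩, hx⟩
    · rintro ⟨⟨θ, a, b⟩, ⟨hθ, ha, hb⟩, hx⟩
      refine ⟨a, ha, b, hb, ?_⟩
      rw [segment_eq_image]
      exact ⟨θ, hθ, hx⟩
  rw [heq]
  apply (isCompact_Icc.prod (hK.prod hL)).image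
  exact ((continuous_const.sub continuous_fst).smul
      (continuous_fst.comp continuous_snd)).add
    (continuous_fst.smul (continuous_snd.comp continuous_snd))

lemma isCompact_convexHull_union {K L : Set E} (hK : IsCompact K) (hL : IsCompact L)
    (hKc : Convex ℝ K) (hLc : Convex ℝ L) (hK0 : K.Nonempty) (hL0 : L.Nonempty) :
    IsCompact (convexHull ℝ (K ∪ L)) := by
  rw [Convex.convexHull_union hKc hLc hK0 hL0]
  exact isCompact_convexJoin hK hL

lemma isCompact_convexHull_biUnion {ι : Type*} (s : Finset ι) (K : ι → Set E)
    (hc : ∀ i, IsCompact (K i)) (hv : ∀ i, Convex ℝ (K i)) (hn : ∀ i, (K i).Nonempty) :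
    IsCompact (convexHull ℝ (⋃ i ∈ s, K i)) := by
  classical
  induction s using Finset.induction_on with
  | empty => simp [convexHull_empty]
  | @insert a s ha ih =>
    rw [Finset.set_biUnion_insert]
    rcases s.eq_empty_or_nonempty with rfl | hs
    · simp only [Finset.notMem_empty, Set.iUnion_of_empty, Set.iUnion_empty, Set.union_empty]
      rw [(hv a).convexHull_eq]
      exact hc a
    · have hU : (⋃ i ∈ s, K i).Nonempty := by
        obtain ⟨i, hi⟩ := hs
        obtain ⟨x, hx⟩ := hn i
        exact ⟨x, Set.mem_biUnion hi hx⟩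
      rw [← convexHull_convexHull_union_right,
        Convex.convexHull_union (hv a) (convex_convexHull ℝ _) (hn a)
          (hU.mono (subset_convexHull ℝ _))]
      exact isCompact_convexJoin (hc a) ih

end Hull


section Key

variable {k l : ℕ} {γ ν : Fin l → ℝ} {p q : Fin k → ℝ}

lemma key_lemma (hk : 0 < k) (hl : 0 < l) (hγ : ∀ j, 0 ≤ γ j)
    (hp0 : ∀ i, 0 ≤ p i) (hq0 : ∀ i, 0 ≤ q i) (hpq : ∀ i, 0 < p i + q i)
    (hpsum : ∑ i, p i = 1) (hqsum : ∑ i, q i = 1)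
    (a b : Fin l → ℝ) (S : Matrix (Fin l) (Fin k) ℝ) (hS : IsLP γ ν S) :
    ∃ (f : Fin k → Fin (2 * l ^ 2)) (S₂ : Matrix (Fin l) (Fin (2 * l ^ 2)) ℝ),
      IsThresholdChannel p q (detChannel f) ∧ IsLP γ ν S₂ ∧
      (∑ i, ∑ j, S j i * (a j * p i + b j * q i)) ≤
        ∑ i, ∑ j, (S₂ * detChannel f) j i * (a j * p i + b j * q i) := by
  haveI : Nonempty (Fin k) := ⟨⟨0, hk⟩⟩
  set c : Fin k → Fin l → ℝ := fun i j => a j * p i + b j * q i with hc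
  set F : Matrix (Fin l) (Fin k) ℝ → ℝ := fun S' => ∑ i, ∑ j, S' j i * c i j with hF
  have hFcont : Continuous F := by
    apply continuous_finset_sum
    intro i _
    apply continuous_finset_sum
    intro j _
    exact (continuous_id.matrix_elem j i).mul continuous_const
  obtain ⟨W, hWLP, hWmax⟩ := (isCompact_LP hk (γ := γ) (ν := ν)).exists_isMaxOn
    ⟨S, hS⟩ hFcont.continuousOn
  set lb : Fin l → ℝ := rowMin W with hlb
  have hlb_le : ∀ j i, lb j ≤ W j i := fun j i =>
    csInf_le (Set.finite_range _).bddBelow ⟨i, rfl⟩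
  have hlb_mem : ∀ j, ∃ i0, W j i0 = lb j := by
    intro j
    have := (Set.range_nonempty (fun i => W j i)).csInf_mem (Set.finite_range _)
    obtain ⟨i0, hi0⟩ := this
    exact ⟨i0, hi0⟩
  set ub : Fin l → ℝ := fun j => γ j * lb j + ν j with hub
  have hlb0 : ∀ j, 0 ≤ lb j := by
    intro j; obtain ⟨i0, hi0⟩ := hlb_mem j; rw [← hi0]; exact hWLP.1.1 j i0
  have hub_le : ∀ j i, W j i ≤ ub j := by
    intro j i
    obtain ⟨i0, hi0⟩ := hlb_mem j
    calc W j i ≤ γ j * W j i0 + ν j := hWLP.2 j i i0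
      _ = ub j := by rw [hi0]
  have hcolQ : ∀ i, inQ lb ub (fun j => W j i) :=
    fun i => ⟨fun j => hlb_le j i, fun j => hub_le j i, hWLP.1.2 i⟩
  -- each column of W maximizes its own objective over the box-simplex
  have hcolmax : ∀ i y, inQ lb ub y → ∑ j, c i j * y j ≤ ∑ j, c i j * W j i := by
    intro i y hy
    set W' : Matrix (Fin l) (Fin k) ℝ := fun j i'' => if i'' = i then y j else W j i'' with hW'
    have hW'bounds : ∀ j i'', lb j ≤ W' j i'' ∧ W' j i'' ≤ ub j := by
      intro j i''
      rw [hW']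
      dsimp only
      split_ifs
      · exact ⟨hy.1 j, hy.2.1 j⟩
      · exact ⟨hlb_le j i'', hub_le j i''⟩
    have hW'LP : IsLP γ ν W' := by
      refine ⟨⟨fun r c' => le_trans (hlb0 r) (hW'bounds r c').1, fun c' => ?_⟩, fun j i1 i2 => ?_⟩
      · rw [hW']; dsimp only; split_ifs with h
        · exact hy.2.2
        · exact hWLP.1.2 c'
      · calc W' j i1 ≤ ub j := (hW'bounds j i1).2
          _ = γ j * lb j + ν j := rfl
          _ ≤ γ j * W' j i2 + ν j := by
              have := mul_le_mul_of_nonneg_left (hW'bounds j i2).1 (hγ j)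
              linarith
    have hFle : F W' ≤ F W := hWmax hW'LP
    have hsplit : ∀ M : Matrix (Fin l) (Fin k) ℝ,
        F M = ∑ i'' ∈ Finset.univ.erase i, (∑ j, M j i'' * c i'' j) + ∑ j, M j i * c i j := by
      intro M
      rw [hF]
      exact (Finset.sum_erase_add Finset.univ _ (Finset.mem_univ i)).symm
    rw [hsplit W', hsplit W] at hFle
    have herase : ∑ i'' ∈ Finset.univ.erase i, (∑ j, W' j i'' * c i'' j)
        = ∑ i'' ∈ Finset.univ.erase i, (∑ j, W j i'' * c i'' j) := by
      apply Finset.sum_congr rfl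
      intro i'' hi''
      apply Finset.sum_congr rfl
      intro j _
      rw [hW']
      dsimp only
      rw [if_neg (Finset.ne_of_mem_erase hi'')]
    rw [herase] at hFle
    have h1 : ∑ j, W' j i * c i j = ∑ j, c i j * y j := by
      apply Finset.sum_congr rfl
      intro j _
      rw [hW']; dsimp only; rw [if_pos rfl, mul_comm]
    have h2 : ∑ j, W j i * c i j = ∑ j, c i j * W j i := by
      apply Finset.sum_congr rfl; intro j _; rw [mul_comm]
    rw [h1, h2] at hFle
    linarith
  -- the rank function and the threshold map
  have hrkbound : ∀ i, rk p q a b i < 2 * l ^ 2 := by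
    intro i
    have := rk_le p q a b i
    have h2 : l ^ 2 = l * l := sq l
    have : l * l ≥ 1 := Nat.one_le_iff_ne_zero.mpr (by positivity)
    omega
  set f : Fin k → Fin (2 * l ^ 2) := fun i => ⟨rk p q a b i, hrkbound i⟩ with hf
  have hcross_of_lr : ∀ u v : Fin k, lr p q u ≤ lr p q v → p u * q v ≤ p v * q u :=
    fun u v h => (lr_le_iff hq0 hpq u v).mp h
  have hthresh : IsThresholdChannel p q (detChannel f) := by
    refine ⟨f, rfl, fun u v w huv hfuv huw hwv => ?_⟩
    have h1 : rk p q a b u ≤ rk p q a b w :=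
      rk_mono hp0 hq0 hpq a b (hcross_of_lr u w huw.le)
    have h2 : rk p q a b w ≤ rk p q a b v :=
      rk_mono hp0 hq0 hpq a b (hcross_of_lr w v hwv.le)
    have h3 : rk p q a b u = rk p q a b v := by
      have := congrArg Fin.val hfuv
      simpa [hf] using this
    apply Fin.ext
    simp only [hf]
    omega
  -- representatives
  set rep : Fin (2 * l ^ 2) → Fin k := fun n => if h : ∃ i, f i = n then h.choose else ⟨0, hk⟩
    with hrep
  have hrep_spec : ∀ i, f (rep (f i)) = f i := by
    intro i
    have h : ∃ i', f i' = f i := ⟨i, rfl⟩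
    rw [hrep]; dsimp only; rw [dif_pos h]; exact h.choose_spec
  set S₂ : Matrix (Fin l) (Fin (2 * l ^ 2)) ℝ := fun j n => W j (rep n) with hS₂
  have hS₂LP : IsLP γ ν S₂ := by
    refine ⟨⟨fun r c' => hWLP.1.1 r (rep c'), fun c' => hWLP.1.2 (rep c')⟩, fun j i1 i2 => ?_⟩
    exact hWLP.2 j (rep i1) (rep i2)
  refine ⟨f, S₂, hthresh, hS₂LP, ?_⟩
  have hFS : F S ≤ F W := hWmax hS
  have hcols : ∀ j i, (S₂ * detChannel f) j i = W j (rep (f i)) := by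
    intro j i; rw [detChannel_mul_apply]
  have hcolbig : ∀ i, ∑ j, W j i * c i j ≤ ∑ j, W j (rep (f i)) * c i j := by
    intro i
    set u := rep (f i) with hu
    have hrkeq : rk p q a b u = rk p q a b i := congrArg Fin.val (hrep_spec i)
    have hpattern : ∀ j j', (0 < (a j - a j') * p u + (b j - b j') * q u ↔
        0 < (a j - a j') * p i + (b j - b j') * q i) := by
      intro j j'
      rcases le_total (p u * q i) (p i * q u) with hcr | hcr
      · exact rk_eq_pattern hp0 hq0 hpq a b hcr hrkeq j j'
      · exact (rk_eq_pattern hp0 hq0 hpq a b hcr hrkeq.symm j j').symm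
    have hcert_u : Cert lb ub (c u) (fun j => W j u) :=
      cert_of_max (hcolQ u) (hcolmax u)
    have hcert_i : Cert lb ub (c i) (fun j => W j u) := by
      intro j j' hlt
      apply hcert_u j j'
      have h1 : 0 < (a j - a j') * p i + (b j - b j') * q i := by
        rw [hc] at hlt; dsimp only at hlt; nlinarith [hlt]
      have h2 := (hpattern j j').mpr h1
      rw [hc]; dsimp only; nlinarith [h2]
    have := max_of_cert (hcolQ u) hcert_i (fun j => W j i) (hcolQ i)
    calc ∑ j, W j i * c i j = ∑ j, c i j * W j i := by
          apply Finset.sum_congr rfl; intro j _; rw [mul_comm]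
      _ ≤ ∑ j, c i j * W j u := this
      _ = ∑ j, W j u * c i j := by
          apply Finset.sum_congr rfl; intro j _; rw [mul_comm]
  calc F S ≤ F W := hFS
    _ ≤ ∑ i, ∑ j, (S₂ * detChannel f) j i * c i j := by
        rw [hF]
        apply Finset.sum_le_sum
        intro i _
        calc ∑ j, W j i * c i j ≤ ∑ j, W j (rep (f i)) * c i j := hcolbig i
          _ = ∑ j, (S₂ * detChannel f) j i * c i j := by
              apply Finset.sum_congr rfl; intro j _; rw [hcols]

lemma phi_eq {l m : ℕ} (a b : Fin l → ℝ) (p q : Fin m → ℝ) (S : Matrix (Fin l) (Fin m) ℝ) :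
    ∑ j, (S.mulVec p) j * a j + ∑ j, (S.mulVec q) j * b j
      = ∑ i, ∑ j, S j i * (a j * p i + b j * q i) := by
  have h1 : ∀ (v : Fin m → ℝ) (w : Fin l → ℝ) (j : Fin l),
      (S.mulVec v) j * w j = ∑ i, S j i * v i * w j := by
    intro v w j
    rw [Matrix.mulVec, dotProduct, Finset.sum_mul]
  calc ∑ j, (S.mulVec p) j * a j + ∑ j, (S.mulVec q) j * b j
      = ∑ j, ∑ i, (S j i * p i * a j + S j i * q i * b j) := by
        rw [← Finset.sum_add_distrib]
        refine Finset.sum_congr rfl fun j _ => ?_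
        rw [h1 p a j, h1 q b j, ← Finset.sum_add_distrib]
    _ = ∑ i, ∑ j, (S j i * p i * a j + S j i * q i * b j) := Finset.sum_comm
    _ = ∑ i, ∑ j, S j i * (a j * p i + b j * q i) := by
        refine Finset.sum_congr rfl fun i _ => Finset.sum_congr rfl fun j _ => by ring

lemma single_decomp {l : ℕ} (w : Fin l → ℝ) :
    ∑ j, w j • (Pi.single j (1:ℝ) : Fin l → ℝ) = w := by
  funext i
  rw [Finset.sum_apply]
  have h : ∀ j, (w j • (Pi.single j (1:ℝ) : Fin l → ℝ)) i = if i = j then w j else 0 := by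
    intro j
    rw [Pi.smul_apply, Pi.single_apply]
    split_ifs <;> simp
  rw [Finset.sum_congr rfl fun j _ => h j]
  simp

end Key

end Stmt13Aux

open Stmt13Aux

/-- Structure of optimal channels for the LP family: any extreme point of the joint range
decomposes as a threshold channel into `[2ℓ²]` followed by an extreme LP channel. -/
theorem stmt13 (k ℓ : ℕ) (γ ν : Fin ℓ → ℝ) (hγ : ∀ j, 0 ≤ γ j) (hν : ∀ j, 0 ≤ ν j)
    (p q : Fin k → ℝ) (hp : IsDist p) (hq : IsDist q) (hpq : ∀ i, 0 < p i + q i)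
    (A : Set ((Fin ℓ → ℝ) × (Fin ℓ → ℝ)))
    (hA : A = {z | ∃ S : Matrix (Fin ℓ) (Fin k) ℝ,
        IsLP γ ν S ∧ z = (S.mulVec p, S.mulVec q)})
    (T : Matrix (Fin ℓ) (Fin k) ℝ) (hT : IsLP γ ν T)
    (hext : (T.mulVec p, T.mulVec q) ∈ A.extremePoints ℝ) :
    ∃ (T₁ : Matrix (Fin (2 * ℓ ^ 2)) (Fin k) ℝ)
      (T₂ : Matrix (Fin ℓ) (Fin (2 * ℓ ^ 2)) ℝ),
      IsThresholdChannel p q T₁ ∧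
      T₂ ∈ ({S : Matrix (Fin ℓ) (Fin (2 * ℓ ^ 2)) ℝ | IsLP γ ν S}).extremePoints ℝ ∧
      (T.mulVec p, T.mulVec q) = ((T₂ * T₁).mulVec p, (T₂ * T₁).mulVec q) := by
  classical
  rcases Nat.eq_zero_or_pos k with hk0 | hk
  · exfalso; subst hk0; have := hp.2; simpa using this
  rcases Nat.eq_zero_or_pos ℓ with hl0 | hl
  · exfalso; subst hl0
    have := hT.1.2 ⟨0, hk⟩
    simpa using this
  haveI : Nonempty (Fin k) := ⟨⟨0, hk⟩⟩
  have hL0 : 0 < 2 * ℓ ^ 2 := by positivity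
  set L := 2 * ℓ ^ 2 with hL
  set LPL : Set (Matrix (Fin ℓ) (Fin L) ℝ) := {S | IsLP γ ν S} with hLPL
  set Fset : Finset (Fin k → Fin L) :=
    Finset.univ.filter (fun f => IsThresholdChannel p q (detChannel f)) with hFset
  set Psi : (Fin k → Fin L) → Matrix (Fin ℓ) (Fin L) ℝ → (Fin ℓ → ℝ) × (Fin ℓ → ℝ) :=
    fun f S₂ => ((S₂ * detChannel f).mulVec p, (S₂ * detChannel f).mulVec q) with hPsi
  set C : Set ((Fin ℓ → ℝ) × (Fin ℓ → ℝ)) := ⋃ f ∈ Fset, Psi f '' LPL with hC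
  -- convexity of A
  have hAconv : Convex ℝ A := by
    rintro z1 hz1 z2 hz2 ca cb hca hcb hcab
    rw [hA] at hz1 hz2 ⊢
    obtain ⟨S1, hS1, hz1e⟩ := hz1
    obtain ⟨S2, hS2, hz2e⟩ := hz2
    refine ⟨ca • S1 + cb • S2, convex_LP hS1 hS2 hca hcb hcab, ?_⟩
    subst hz1e; subst hz2e
    apply Prod.ext <;>
      simp [Matrix.add_mulVec, Matrix.smul_mulVec]
  -- C ⊆ A
  have hCsubA : C ⊆ A := by
    intro z hz
    rw [hC] at hz
    obtain ⟨f, hfF, S₂, hS₂, rfl⟩ := Set.mem_iUnion₂.mp hz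
    rw [hA]
    exact ⟨S₂ * detChannel f, isLP_comp hS₂ f, rfl⟩
  -- pieces of C are compact convex nonempty
  have hPsiCont : ∀ f, Continuous (Psi f) := by
    intro f
    apply Continuous.prodMk <;>
      exact (Continuous.matrix_mulVec (continuous_id.matrix_mul continuous_const)
        continuous_const)
  have hKc : ∀ f, IsCompact (Psi f '' LPL) := fun f =>
    (isCompact_LP hL0).image (hPsiCont f)
  have hKv : ∀ f, Convex ℝ (Psi f '' LPL) := by
    rintro f _ ⟨X, hX, rfl⟩ _ ⟨Y, hY, rfl⟩ ca cb hca hcb hcab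
    refine ⟨ca • X + cb • Y, convex_LP hX hY hca hcb hcab, ?_⟩
    rw [hPsi]
    apply Prod.ext <;>
      simp [Matrix.add_mul, Matrix.smul_mul, Matrix.add_mulVec, Matrix.smul_mulVec]
  have hKn : ∀ f, (Psi f '' LPL).Nonempty := by
    intro f
    have hS0 : IsLP γ ν ((fun (j : Fin ℓ) (_ : Fin L) => T j ⟨0, hk⟩) :
        Matrix (Fin ℓ) (Fin L) ℝ) :=
      ⟨⟨fun r _ => hT.1.1 r ⟨0, hk⟩, fun _ => hT.1.2 ⟨0, hk⟩⟩,
        fun j _ _ => hT.2 j ⟨0, hk⟩ ⟨0, hk⟩⟩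
    exact ⟨Psi f _, Set.mem_image_of_mem _ hS0⟩
  have hhullclosed : IsClosed (convexHull ℝ C) := by
    rw [hC]
    exact (isCompact_convexHull_biUnion Fset _ hKc hKv hKn).isClosed
  have hAsubHull : A ⊆ convexHull ℝ C := by
    intro x hx
    by_contra hxH
    obtain ⟨φ, u, hφ1, hφ2⟩ :=
      geometric_hahn_banach_closed_point (convex_convexHull ℝ C) hhullclosed hxH
    set a : Fin ℓ → ℝ := fun j => φ ((Pi.single j (1:ℝ) : Fin ℓ → ℝ), (0 : Fin ℓ → ℝ)) with ha
    set b : Fin ℓ → ℝ := fun j => φ ((0 : Fin ℓ → ℝ), (Pi.single j (1:ℝ) : Fin ℓ → ℝ)) with hb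
    have hrepφ : ∀ z : (Fin ℓ → ℝ) × (Fin ℓ → ℝ),
        φ z = ∑ j, z.1 j * a j + ∑ j, z.2 j * b j := by
      intro z
      have hz : z = (∑ j, z.1 j • (((Pi.single j (1:ℝ) : Fin ℓ → ℝ), (0 : Fin ℓ → ℝ)) :
            (Fin ℓ → ℝ) × (Fin ℓ → ℝ)))
          + (∑ j, z.2 j • (((0 : Fin ℓ → ℝ), (Pi.single j (1:ℝ) : Fin ℓ → ℝ)) :
            (Fin ℓ → ℝ) × (Fin ℓ → ℝ))) := by
        apply Prod.ext
        · simp only [Prod.fst_add, Prod.fst_sum, Prod.smul_fst, smul_zero,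
            Finset.sum_const_zero, add_zero, single_decomp]
        · simp only [Prod.snd_add, Prod.snd_sum, Prod.smul_snd, smul_zero,
            Finset.sum_const_zero, zero_add, single_decomp]
      have hφz := congrArg φ hz
      rw [map_add, map_sum, map_sum] at hφz
      simp only [map_smul, smul_eq_mul] at hφz
      exact hφz
    rw [hA] at hx
    obtain ⟨S, hSLP, hxe⟩ := hx
    obtain ⟨f, S₂, hthresh, hS₂LP, hFle⟩ :=
      key_lemma hk hl hγ hp.1 hq.1 hpq hp.2 hq.2 a b S hSLP
    have hfF : f ∈ Fset := by
      rw [hFset]; exact Finset.mem_filter.mpr ⟨Finset.mem_univ f, hthresh⟩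
    have hz'C : Psi f S₂ ∈ C := by
      rw [hC]
      exact Set.mem_iUnion₂.mpr ⟨f, hfF, Set.mem_image_of_mem _ hS₂LP⟩
    have hφx : φ x = ∑ i, ∑ j, S j i * (a j * p i + b j * q i) := by
      rw [hxe, hrepφ]; exact phi_eq a b p q S
    have hφz' : φ (Psi f S₂)
        = ∑ i, ∑ j, (S₂ * detChannel f) j i * (a j * p i + b j * q i) := by
      rw [hrepφ]; exact phi_eq a b p q _
    have h1 := hφ1 _ (subset_convexHull ℝ C hz'C)
    rw [hφz'] at h1
    rw [hφx] at hφ2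
    linarith
  have hAeq : A = convexHull ℝ C :=
    Set.Subset.antisymm hAsubHull (convexHull_min hCsubA hAconv)
  have hextC := hext
  rw [hAeq] at hextC
  have hzC : (T.mulVec p, T.mulVec q) ∈ C := extremePoints_convexHull_subset hextC
  rw [hC] at hzC
  obtain ⟨f, hfF, S₂, hS₂LP, hze⟩ := Set.mem_iUnion₂.mp hzC
  have hthresh : IsThresholdChannel p q (detChannel f) := by
    rw [hFset] at hfF
    exact (Finset.mem_filter.mp hfF).2
  set p' : Fin L → ℝ := (detChannel f).mulVec p with hp'
  set q' : Fin L → ℝ := (detChannel f).mulVec q with hq'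
  have hPsiVec : ∀ X : Matrix (Fin ℓ) (Fin L) ℝ, Psi f X = (X.mulVec p', X.mulVec q') := by
    intro X
    rw [hPsi, hp', hq']
    dsimp only
    rw [Matrix.mulVec_mulVec, Matrix.mulVec_mulVec]
  set G : Set (Matrix (Fin ℓ) (Fin L) ℝ) :=
    {S' | IsLP γ ν S' ∧ S'.mulVec p' = T.mulVec p ∧ S'.mulVec q' = T.mulVec q} with hG
  have hS₂G : S₂ ∈ G := by
    rw [hPsiVec] at hze
    have h1 := congrArg Prod.fst hze
    have h2 := congrArg Prod.snd hze
    exact ⟨hS₂LP, h1, h2⟩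
  have hGclosed : IsClosed G := by
    have h1 : IsClosed {S' : Matrix (Fin ℓ) (Fin L) ℝ | S'.mulVec p' = T.mulVec p} :=
      isClosed_eq (Continuous.matrix_mulVec continuous_id continuous_const) continuous_const
    have h2 : IsClosed {S' : Matrix (Fin ℓ) (Fin L) ℝ | S'.mulVec q' = T.mulVec q} :=
      isClosed_eq (Continuous.matrix_mulVec continuous_id continuous_const) continuous_const
    have hGeq : G = {S' : Matrix (Fin ℓ) (Fin L) ℝ | IsLP γ ν S'} ∩
        ({S' | S'.mulVec p' = T.mulVec p} ∩ {S' | S'.mulVec q' = T.mulVec q}) := by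
      rw [hG]; ext S'
      simp only [Set.mem_setOf_eq, Set.mem_inter_iff, and_assoc]
    rw [hGeq]
    exact isClosed_LP.inter (h1.inter h2)
  have hGcompact : IsCompact G :=
    (isCompact_LP hL0).of_isClosed_subset hGclosed (fun S' hS' => hS'.1)
  have hGconvex : Convex ℝ G := by
    rintro X hX Y hY ca cb hca hcb hcab
    refine ⟨convex_LP hX.1 hY.1 hca hcb hcab, ?_, ?_⟩
    · rw [Matrix.add_mulVec, Matrix.smul_mulVec, Matrix.smul_mulVec,
        hX.2.1, hY.2.1, ← add_smul, hcab, one_smul]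
    · rw [Matrix.add_mulVec, Matrix.smul_mulVec, Matrix.smul_mulVec,
        hX.2.2, hY.2.2, ← add_smul, hcab, one_smul]
  letI : IsTopologicalAddGroup (Matrix (Fin ℓ) (Fin L) ℝ) :=
    inferInstanceAs (IsTopologicalAddGroup (Fin ℓ → Fin L → ℝ))
  letI : LocallyConvexSpace ℝ (Matrix (Fin ℓ) (Fin L) ℝ) :=
    inferInstanceAs (LocallyConvexSpace ℝ (Fin ℓ → Fin L → ℝ))
  obtain ⟨T₂, hT₂ext⟩ := hGcompact.extremePoints_nonempty ⟨S₂, hS₂G⟩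
  rw [mem_extremePoints] at hT₂ext
  obtain ⟨hT₂G, hT₂u⟩ := hT₂ext
  refine ⟨detChannel f, T₂, hthresh, ?_, ?_⟩
  · rw [mem_extremePoints]
    refine ⟨hT₂G.1, fun X hX Y hY hseg => ?_⟩
    obtain ⟨ca, cb, hca, hcb, hcab, hXY⟩ := hseg
    have hXA : (X.mulVec p', X.mulVec q') ∈ A := by
      rw [hA]
      refine ⟨X * detChannel f, isLP_comp hX f, ?_⟩
      rw [hp', hq', Matrix.mulVec_mulVec, Matrix.mulVec_mulVec]
    have hYA : (Y.mulVec p', Y.mulVec q') ∈ A := by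
      rw [hA]
      refine ⟨Y * detChannel f, isLP_comp hY f, ?_⟩
      rw [hp', hq', Matrix.mulVec_mulVec, Matrix.mulVec_mulVec]
    have hcombo : ∀ v : Fin L → ℝ, (ca • X + cb • Y).mulVec v
        = ca • X.mulVec v + cb • Y.mulVec v := by
      intro v
      rw [Matrix.add_mulVec, Matrix.smul_mulVec, Matrix.smul_mulVec]
    have hzseg : (T.mulVec p, T.mulVec q) ∈
        openSegment ℝ (X.mulVec p', X.mulVec q') (Y.mulVec p', Y.mulVec q') := by
      refine ⟨ca, cb, hca, hcb, hcab, ?_⟩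
      apply Prod.ext
      · show ca • X.mulVec p' + cb • Y.mulVec p' = T.mulVec p
        rw [← hcombo, hXY]
        exact hT₂G.2.1
      · show ca • X.mulVec q' + cb • Y.mulVec q' = T.mulVec q
        rw [← hcombo, hXY]
        exact hT₂G.2.2
    obtain ⟨hzA, hzkey⟩ := mem_extremePoints.mp hext
    obtain ⟨hXz, hYz⟩ := hzkey _ hXA _ hYA hzseg
    have hXG : X ∈ G := by
      refine ⟨hX, ?_, ?_⟩
      · exact congrArg Prod.fst hXz
      · exact congrArg Prod.snd hXz
    have hYG : Y ∈ G := by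
      refine ⟨hY, ?_, ?_⟩
      · exact congrArg Prod.fst hYz
      · exact congrArg Prod.snd hYz
    exact hT₂u X hXG Y hYG ⟨ca, cb, hca, hcb, hcab, hXY⟩
  · apply Prod.ext
    · show T.mulVec p = (T₂ * detChannel f).mulVec p
      rw [← Matrix.mulVec_mulVec]
      exact hT₂G.2.1.symm
    · show T.mulVec q = (T₂ * detChannel f).mulVec q
      rw [← Matrix.mulVec_mulVec]
      exact hT₂G.2.2.symm
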